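/- For every a ∈ ℝ with a ≠ 0 and every t > 0, ∫₀ᵗ (|a|·exp(−a²/(2νu))/√(2πνu³)) du = erfc(|a|/√(2νt)), where ν > 0 is a fixed constant. -/

import Mathlib

open Real

/-- The error function `erf x = (2/√π) ∫₀ˣ exp(−s²) ds`. -/
noncomputable def erf (x : ℝ) : ℝ := 2 / Real.sqrt π * ∫ s in (0:ℝ)..x, Real.exp (-s ^ 2)

/-- The complementary error function. -/
noncomputable def erfc (x : ℝ) : ℝ := 1 - erf x

open Filter MeasureTheory intervalIntegral Set Topology

lemma hasDerivAt_erf (x : ℝ) :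
    HasDerivAt erf (2 / Real.sqrt π * Real.exp (-x ^ 2)) x := by
  have hc : Continuous fun s : ℝ => Real.exp (-s ^ 2) := by continuity
  have h := (hc.integral_hasStrictDerivAt 0 x).hasDerivAt
  exact h.const_mul (2 / Real.sqrt π)

lemma tendsto_erf_atTop : Tendsto erf atTop (𝓝 1) := by
  have hint : IntegrableOn (fun s : ℝ => Real.exp (-s ^ 2)) (Ioi 0) := by
    have := (integrable_exp_neg_mul_sq (b := 1) one_pos).integrableOn (s := Ioi (0:ℝ))
    simpa using this
  have h1 := intervalIntegral_tendsto_integral_Ioi (μ := volume) 0 hint tendsto_id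
  have h2 : ∫ s in Ioi (0:ℝ), Real.exp (-s ^ 2) = Real.sqrt π / 2 := by
    have := integral_gaussian_Ioi 1
    simpa using this
  rw [h2] at h1
  have := h1.const_mul (2 / Real.sqrt π)
  have hπ : Real.sqrt π ≠ 0 := by positivity
  have : Tendsto erf atTop (𝓝 (2 / Real.sqrt π * (Real.sqrt π / 2))) := by
    exact this
  convert this using 2
  field_simp

/-- The integral of the density of the first hitting time of level `a` by a Brownian motion
with variance parameter `ν` equals `erfc (|a|/√(2νt))`. -/
theorem integral_hitting_density_eq_erfc (ν a t : ℝ) (hν : 0 < ν) (ha : a ≠ 0) (ht : 0 < t) :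
    ∫ u in (0:ℝ)..t, |a| * Real.exp (-(a ^ 2) / (2 * ν * u)) / Real.sqrt (2 * π * ν * u ^ 3) =
      erfc (|a| / Real.sqrt (2 * ν * t)) := by
  set f' : ℝ → ℝ := fun u => |a| * Real.exp (-(a ^ 2) / (2 * ν * u)) / Real.sqrt (2 * π * ν * u ^ 3)
    with hf'
  set F : ℝ → ℝ := fun u => erfc (|a| / Real.sqrt (2 * ν * u)) with hF
  have hapos : 0 < |a| := abs_pos.mpr ha
  -- derivative
  have hderiv : ∀ u : ℝ, 0 < u → HasDerivAt F (f' u) u := by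
    intro u hu
    have hw : 0 < 2 * ν * u := by positivity
    have hsw : 0 < Real.sqrt (2 * ν * u) := Real.sqrt_pos.mpr hw
    have hinner : HasDerivAt (fun u : ℝ => 2 * ν * u) (2 * ν) u := by
      simpa using (hasDerivAt_id u).const_mul (2 * ν)
    have hsqrt : HasDerivAt (fun u : ℝ => Real.sqrt (2 * ν * u))
        (1 / (2 * Real.sqrt (2 * ν * u)) * (2 * ν)) u :=
      (Real.hasDerivAt_sqrt hw.ne').comp u hinner
    have hg : HasDerivAt (fun u : ℝ => |a| / Real.sqrt (2 * ν * u))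
        ((0 * Real.sqrt (2 * ν * u) - |a| * (1 / (2 * Real.sqrt (2 * ν * u)) * (2 * ν))) /
          (Real.sqrt (2 * ν * u)) ^ 2) u :=
      (hasDerivAt_const u |a|).div hsqrt hsw.ne'
    set x := |a| / Real.sqrt (2 * ν * u)
    have herfc : HasDerivAt erfc (-(2 / Real.sqrt π * Real.exp (-x ^ 2))) x := by
      exact ((hasDerivAt_const x (1:ℝ)).sub (hasDerivAt_erf x)).congr_deriv (by simp)
    have hcomp := herfc.comp u hg
    refine hcomp.congr_deriv ?_
    symm
    have hx2 : x ^ 2 = a ^ 2 / (2 * ν * u) := by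
      rw [div_pow, sq_abs, Real.sq_sqrt hw.le]
    rw [hf']
    simp only [hx2, zero_mul, zero_sub]
    have hsq : Real.sqrt (2 * π * ν * u ^ 3) = Real.sqrt π * Real.sqrt (2 * ν * u) * u := by
      rw [show 2 * π * ν * u ^ 3 = π * ((2 * ν * u) * u ^ 2) by ring, Real.sqrt_mul pi_pos.le,
        Real.sqrt_mul hw.le, Real.sqrt_sq hu.le]; ring
    have hsπ : 0 < Real.sqrt π := Real.sqrt_pos.mpr pi_pos
    have hsw2 : Real.sqrt (2 * ν * u) ^ 2 = 2 * ν * u := Real.sq_sqrt hw.le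
    rw [hsq, hsw2, neg_div]
    field_simp
  -- integrability
  have hcont : ContinuousOn f' (Icc 0 t) := by
    intro u hu
    rcases eq_or_lt_of_le hu.1 with h0 | h0
    · -- continuity at 0
      have hf'0 : f' 0 = 0 := by simp [hf']
      rw [← h0]
      rw [ContinuousWithinAt, hf'0]
      have key : Tendsto f' (𝓝[>] (0:ℝ)) (𝓝 0) := by
        have h1 : Tendsto (fun x : ℝ => x ^ ((3:ℝ)/2) * Real.exp (-(a ^ 2 / (2 * ν)) * x))
            atTop (𝓝 0) :=
          tendsto_rpow_mul_exp_neg_mul_atTop_nhds_zero ((3:ℝ)/2) _ (by positivity)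
        have h2 : Tendsto (fun u : ℝ => u⁻¹) (𝓝[>] (0:ℝ)) atTop := tendsto_inv_nhdsGT_zero
        have h3 := (h1.comp h2).const_mul (|a| / Real.sqrt (2 * π * ν))
        rw [mul_zero] at h3
        refine h3.congr' ?_
        filter_upwards [self_mem_nhdsWithin] with u (hu : 0 < u)
        have hup : (0:ℝ) ≤ u := hu.le
        have hrw : Real.sqrt (2 * π * ν * u ^ 3) = Real.sqrt (2 * π * ν) * u ^ ((3:ℝ)/2) := by
          rw [Real.sqrt_mul (by positivity), Real.sqrt_eq_rpow (u ^ 3), ← Real.rpow_natCast u 3,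
            ← Real.rpow_mul hup]
          norm_num
        have hinv : (u⁻¹) ^ ((3:ℝ)/2) = (u ^ ((3:ℝ)/2))⁻¹ := by
          rw [← Real.rpow_neg_one u, ← Real.rpow_mul hup]
          rw [show (-1:ℝ) * (3/2) = -(3/2) by norm_num, Real.rpow_neg hup]
        have hexp : -(a ^ 2) / (2 * ν * u) = -(a ^ 2 / (2 * ν)) * u⁻¹ := by
          field_simp
        simp only [Function.comp, hf', hrw, hinv, hexp]
        have hpow : (0:ℝ) < u ^ ((3:ℝ)/2) := Real.rpow_pos_of_pos hu _
        field_simp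
      rw [nhdsWithin_Icc_eq_nhdsGE (by linarith : (0:ℝ) < t),
        show Ici (0:ℝ) = insert 0 (Ioi 0) from Set.Ioi_insert.symm, nhdsWithin_insert]
      refine Filter.tendsto_sup.mpr ⟨?_, key⟩
      simpa [hf'0] using tendsto_pure_nhds f' 0
    · refine ContinuousAt.continuousWithinAt ?_
      have h1 : Real.sqrt (2 * π * ν * u ^ 3) ≠ 0 := by positivity
      have h2 : 2 * ν * u ≠ 0 := by positivity
      rw [hf']
      fun_prop (disch := assumption)
  have hint : IntervalIntegrable f' volume 0 t := by
    apply ContinuousOn.intervalIntegrable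
    rwa [uIcc_of_le ht.le]
  -- limit of F at 0⁺ is 0
  have hF0 : Tendsto F (𝓝[>] (0:ℝ)) (𝓝 0) := by
    have hsqrt0 : Tendsto (fun u : ℝ => Real.sqrt (2 * ν * u)) (𝓝[>] (0:ℝ)) (𝓝[>] 0) := by
      rw [tendsto_nhdsWithin_iff]
      constructor
      · have : Continuous (fun u : ℝ => Real.sqrt (2 * ν * u)) := by fun_prop
        have := this.tendsto 0
        simpa using this.mono_left nhdsWithin_le_nhds
      · filter_upwards [self_mem_nhdsWithin] with u (hu : 0 < u)
        exact Real.sqrt_pos.mpr (by positivity)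
    have hginf : Tendsto (fun u : ℝ => |a| / Real.sqrt (2 * ν * u)) (𝓝[>] (0:ℝ)) atTop := by
      simp only [div_eq_mul_inv]
      exact (tendsto_inv_nhdsGT_zero.comp hsqrt0).const_mul_atTop hapos
    have herfc1 : Tendsto erfc atTop (𝓝 0) := by
      have := tendsto_erf_atTop.const_sub 1
      rw [sub_self] at this
      exact this
    exact herfc1.comp hginf
  -- limit of F at t⁻ is F t
  have hFt : Tendsto F (𝓝[<] t) (𝓝 (F t)) :=
    ((hderiv t ht).continuousAt.continuousWithinAt).tendsto
  have := intervalIntegral.integral_eq_sub_of_hasDerivAt_of_tendsto ht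
    (fun u hu => hderiv u hu.1) hint hF0 hFt
  rw [this, sub_zero]
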